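/- Let n ≥ η ≥ 1 with k⊥ = ⌊n/η⌋ and r = n/η - k⊥. For an integer x with x ≥ η and x + k⊥ + 1 ≤ n, define the truncated-spread estimator expectation E[Γ̃] = η(1 - E[p_K]) where E[p_K] is as in the randomized rounding setup, and the truncated spread Γ = min(x, η) = η. Then (1 - 1/e)·Γ ≤ E[Γ̃] ≤ Γ. -/

import Mathlib

theorem truncated_estimator_accuracy (n x : ℕ) (η : ℝ) (hη : 1 ≤ η) (hηn : η ≤ (n : ℝ))
    (hxη : η ≤ (x : ℝ)) (hfit : x + ⌊(n : ℝ) / η⌋₊ + 1 ≤ n) :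
    let k : ℕ := ⌊(n : ℝ) / η⌋₊
    let r : ℝ := (n : ℝ) / η - k
    let p : ℕ → ℝ := fun m => ∏ i ∈ Finset.range m, ((n : ℝ) - x - i) / ((n : ℝ) - i)
    let EΓ : ℝ := η * (1 - (r * p (k + 1) + (1 - r) * p k))
    (1 - 1 / Real.exp 1) * η ≤ EΓ ∧ EΓ ≤ η := by
  intro k r p EΓ
  have hη0 : (0:ℝ) < η := lt_of_lt_of_le one_pos hη
  have hn0 : (0:ℝ) < n := lt_of_lt_of_le hη0 hηn
  have hx1 : (1:ℝ) ≤ x := le_trans hη hxη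
  have hfit' : (x:ℝ) + (k:ℝ) + 1 ≤ (n:ℝ) := by exact_mod_cast hfit
  have hr0 : 0 ≤ r := sub_nonneg.2 (Nat.floor_le (by positivity))
  have hr1 : r ≤ 1 := by
    have := Nat.lt_floor_add_one ((n:ℝ)/η)
    have : (n:ℝ)/η < (k:ℝ) + 1 := by exact_mod_cast this
    simp only [r]; linarith
  -- nonnegativity and the key per-factor bound
  have hfac : ∀ i : ℕ, (i:ℝ) ≤ (k:ℝ) →
      0 ≤ ((n:ℝ) - x - i) / ((n:ℝ) - i) ∧
      ((n:ℝ) - x - i) / ((n:ℝ) - i) ≤ Real.exp (-(x/n)) := by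
    intro i hi
    have hden : (0:ℝ) < (n:ℝ) - i := by linarith
    have hnum : (0:ℝ) ≤ (n:ℝ) - x - i := by linarith
    have hi0 : (0:ℝ) ≤ (i:ℝ) := Nat.cast_nonneg i
    constructor
    · positivity
    · have h1 : ((n:ℝ) - x - i) / ((n:ℝ) - i) ≤ ((n:ℝ) - x) / n := by
        rw [div_le_div_iff₀ hden hn0]
        nlinarith
      have h2 : ((n:ℝ) - x) / n = 1 - x/n := by field_simp
      have h3 : 1 - (x:ℝ)/n ≤ Real.exp (-(x/n)) := by
        have := Real.add_one_le_exp (-((x:ℝ)/n)); linarith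
      linarith
  have hpk_nonneg : ∀ m : ℕ, (m:ℝ) ≤ (k:ℝ) + 1 → 0 ≤ p m := by
    intro m hm
    apply Finset.prod_nonneg
    intro i hi
    have hik : (i:ℝ) ≤ (k:ℝ) := by
      have := Finset.mem_range.1 hi
      have : (i:ℝ) + 1 ≤ (m:ℝ) := by exact_mod_cast this
      linarith
    exact (hfac i hik).1
  have hp0 : 0 ≤ p k := hpk_nonneg k (by linarith)
  have hp1 : 0 ≤ p (k+1) := hpk_nonneg (k+1) (by push_cast; linarith)
  have hE0 : 0 ≤ r * p (k+1) + (1-r) * p k := by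
    have := mul_nonneg hr0 hp1
    have := mul_nonneg (by linarith : (0:ℝ) ≤ 1 - r) hp0
    linarith
  constructor
  · -- lower bound
    -- p k ≤ exp(-(x/n))^k
    have hpk_le : p k ≤ Real.exp (-(x/n)) ^ k := by
      have : p k ≤ ∏ i ∈ Finset.range k, Real.exp (-(x/n)) := by
        apply Finset.prod_le_prod
        · intro i hi
          have hik : (i:ℝ) ≤ (k:ℝ) := by
            have := Finset.mem_range.1 hi
            have : (i:ℝ) + 1 ≤ (k:ℝ) := by exact_mod_cast this
            linarith
          exact (hfac i hik).1
        · intro i hi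
          have hik : (i:ℝ) ≤ (k:ℝ) := by
            have := Finset.mem_range.1 hi
            have : (i:ℝ) + 1 ≤ (k:ℝ) := by exact_mod_cast this
            linarith
          exact (hfac i hik).2
      simpa using this
    -- p (k+1) = p k * q
    have hsucc : p (k+1) = p k * (((n:ℝ) - x - k) / ((n:ℝ) - k)) := by
      simp only [p, Finset.prod_range_succ]
    set q : ℝ := ((n:ℝ) - x - k) / ((n:ℝ) - k) with hq
    have hqb := hfac k le_rfl
    -- E = p k * (1 - r + r*q)
    have hE_eq : r * p (k+1) + (1-r) * p k = p k * (1 - r + r * q) := by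
      rw [hsucc]; ring
    -- 1 - r + r*q ≤ exp(-(r*x/n))
    have hmix : 1 - r + r * q ≤ Real.exp (-(r*x/n)) := by
      have hq_le : q ≤ ((n:ℝ) - x)/n := by
        rw [hq, div_le_div_iff₀ (by linarith : (0:ℝ) < (n:ℝ) - k) hn0]
        have hk0 : (0:ℝ) ≤ (k:ℝ) := Nat.cast_nonneg k
        nlinarith
      have h1 : 1 - r + r * q ≤ 1 - r * x / n := by
        have := mul_le_mul_of_nonneg_left hq_le hr0
        have hxn : r * (((n:ℝ) - x)/n) = r - r * x / n := by field_simp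
        linarith [hxn ▸ this]
      have h2 : 1 - r * (x:ℝ) / n ≤ Real.exp (-(r*x/n)) := by
        have := Real.add_one_le_exp (-(r*(x:ℝ)/n)); linarith
      linarith
    have hmix0 : 0 ≤ 1 - r + r * q := by
      have h := mul_nonneg hr0 hqb.1
      rw [← hq] at h
      linarith
    have hE_le : r * p (k+1) + (1-r) * p k ≤ Real.exp (-(x/n)) ^ k * Real.exp (-(r*x/n)) := by
      rw [hE_eq]
      exact mul_le_mul hpk_le hmix hmix0 (pow_nonneg (Real.exp_nonneg _) k)
    have hexp_eq : Real.exp (-(x/n)) ^ k * Real.exp (-(r*x/n)) = Real.exp (-(((k:ℝ)+r)*x/n)) := by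
      rw [← Real.exp_nat_mul, ← Real.exp_add]
      ring_nf
    have hkr : (k:ℝ) + r = (n:ℝ)/η := by simp only [r]; ring
    have harg : (((k:ℝ)+r)*x/n) = (x:ℝ)/η := by
      rw [hkr]; field_simp
    have hx_eta : (1:ℝ) ≤ (x:ℝ)/η := (one_le_div hη0).2 hxη
    have hfin : Real.exp (-(((k:ℝ)+r)*x/n)) ≤ 1 / Real.exp 1 := by
      rw [harg]
      rw [one_div, ← Real.exp_neg]
      exact Real.exp_le_exp.2 (by linarith)
    have hE_final : r * p (k+1) + (1-r) * p k ≤ 1 / Real.exp 1 :=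
      le_trans hE_le (hexp_eq ▸ hfin)
    simp only [EΓ]
    have := mul_le_mul_of_nonneg_left hE_final (le_of_lt hη0)
    linarith
  · simp only [EΓ]
    have := mul_nonneg (le_of_lt hη0) hE0
    linarith
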